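/- Consider the bipartite graph whose vertex set is the union of the closed balls B̄_ρ(x*) and B̄_ρ(−x*) on the sphere S²(r) (with ρ = √(4r² − 1), 1/2 < r < √3/3 and ρ < distance conditions ensuring the balls are disjoint), with edges between points at Euclidean distance 1. Then this graph is connected: any point of B̄_ρ(x*) is joined to some point adjacent also to x* (they share a common neighbor), and there is an edge between the two balls; consequently, a proper 2-coloring of this graph, if it exists, is unique up to swapping the colors. -/

import Mathlib

open RealInnerProductSpace

private lemma stmt11_orth (a b : EuclideanSpace ℝ (Fin 3)) :
    ∃ n : EuclideanSpace ℝ (Fin 3), n ≠ 0 ∧ ⟪a, n⟫ = 0 ∧ ⟪b, n⟫ = 0 := by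
  set f : EuclideanSpace ℝ (Fin 3) →ₗ[ℝ] ℝ × ℝ :=
    ((innerSL ℝ a).toLinearMap).prod ((innerSL ℝ b).toLinearMap) with hf
  have hk : 0 < Module.finrank ℝ (LinearMap.ker f) := by
    have h1 := LinearMap.finrank_range_add_finrank_ker f
    have h2 : Module.finrank ℝ (LinearMap.range f) ≤ 2 := by
      have := Submodule.finrank_le (LinearMap.range f)
      simpa using this
    have h3 : Module.finrank ℝ (EuclideanSpace ℝ (Fin 3)) = 3 := by simp
    omega
  have hne : LinearMap.ker f ≠ ⊥ := by
    intro h; rw [h] at hk; simp at hk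
  obtain ⟨n, hn, hn0⟩ := Submodule.exists_mem_ne_zero_of_ne_bot hne
  refine ⟨n, hn0, ?_, ?_⟩ <;>
  · have := LinearMap.mem_ker.mp hn
    simp [hf, LinearMap.prod_apply, Prod.ext_iff] at this
    first
      | exact this.1
      | exact this.2

/-- Key lemma: two points on the sphere of radius r at distance ≤ ρ have a
common point at distance exactly ρ from both. -/
private lemma stmt11_key (r : ℝ) (hr : 1/2 < r) (hr2 : r ^ 2 < 1/3)
    (a b : EuclideanSpace ℝ (Fin 3)) (ha : ‖a‖ = r) (hb : ‖b‖ = r)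
    (hab : ‖a - b‖ ≤ Real.sqrt (4 * r ^ 2 - 1)) :
    ∃ q : EuclideanSpace ℝ (Fin 3), ‖q‖ = r ∧
      ‖q - a‖ = Real.sqrt (4 * r ^ 2 - 1) ∧ ‖q - b‖ = Real.sqrt (4 * r ^ 2 - 1) := by
  have hr0 : (0:ℝ) < r := by linarith
  have hρ2 : (0:ℝ) < 4 * r ^ 2 - 1 := by nlinarith
  have hρ : Real.sqrt (4 * r ^ 2 - 1) ^ 2 = 4 * r ^ 2 - 1 := Real.sq_sqrt hρ2.le
  obtain ⟨s, hsdef⟩ : ∃ s : ℝ, s = ⟪a, b⟫ := ⟨_, rfl⟩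
  have hab2 : ‖a - b‖ ^ 2 = 2 * r ^ 2 - 2 * s := by
    rw [norm_sub_sq_real, ha, hb, ← hsdef]; ring
  have hs : (1 - 2 * r ^ 2) / 2 ≤ s := by
    have : ‖a - b‖ ^ 2 ≤ 4 * r ^ 2 - 1 := by
      calc ‖a - b‖ ^ 2 ≤ Real.sqrt (4 * r ^ 2 - 1) ^ 2 := by
            apply pow_le_pow_left₀ (norm_nonneg _) hab
        _ = 4 * r ^ 2 - 1 := hρ
    linarith [hab2 ▸ this]
  obtain ⟨t, htdef⟩ : ∃ t : ℝ, t = 1/2 - r ^ 2 := ⟨_, rfl⟩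
  have ht0 : 0 < t := by rw [htdef]; linarith
  have hrs : (1:ℝ)/2 ≤ r ^ 2 + s := by linarith
  have hrs0 : (0:ℝ) < r ^ 2 + s := by linarith
  obtain ⟨α, hαdef⟩ : ∃ α : ℝ, α = t / (r ^ 2 + s) := ⟨_, rfl⟩
  have hα : α * (r ^ 2 + s) = t := by rw [hαdef]; exact div_mul_cancel₀ _ hrs0.ne'
  -- the leftover squared length
  obtain ⟨c, hcdef⟩ : ∃ c : ℝ, c = r ^ 2 - α ^ 2 * (2 * r ^ 2 + 2 * s) := ⟨_, rfl⟩
  have hc0 : 0 ≤ c := by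
    have h4t : 2 * t < r := by
      have : (0:ℝ) < (2*r - 1) * (r + 1) := by
        apply mul_pos <;> linarith
      nlinarith [htdef, this]
    have : α ^ 2 * (2 * r ^ 2 + 2 * s) = 2 * t ^ 2 / (r ^ 2 + s) := by
      rw [hαdef]; field_simp
    rw [hcdef, this, sub_nonneg, div_le_iff₀ hrs0]
    nlinarith [htdef]
  obtain ⟨n, hn0, hna, hnb⟩ := stmt11_orth a b
  have hnn : (0:ℝ) < ‖n‖ := norm_pos_iff.mpr hn0
  obtain ⟨β, hβdef⟩ : ∃ β : ℝ, β = Real.sqrt c / ‖n‖ := ⟨_, rfl⟩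
  refine ⟨α • (a + b) + β • n, ?_⟩
  have han : ⟪n, a⟫ = 0 := by rw [real_inner_comm]; exact hna
  have hbn : ⟪n, b⟫ = 0 := by rw [real_inner_comm]; exact hnb
  have haa : ⟪a, a⟫ = r ^ 2 := by rw [real_inner_self_eq_norm_sq, ha]
  have hbb : ⟪b, b⟫ = r ^ 2 := by rw [real_inner_self_eq_norm_sq, hb]
  have hba : ⟪b, a⟫ = s := by rw [hsdef]; exact (real_inner_comm b a).symm
  have hq2 : ‖α • (a + b) + β • n‖ ^ 2 = r ^ 2 := by
    rw [← real_inner_self_eq_norm_sq]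
    simp only [inner_add_left, inner_add_right, real_inner_smul_left,
      real_inner_smul_right, haa, hbb, hba, hna, hnb, han, hbn, ← hsdef]
    have hβn : β ^ 2 * (‖n‖ ^ 2) = c := by
      rw [hβdef, div_pow, div_mul_cancel₀ _ (pow_ne_zero 2 hnn.ne'), Real.sq_sqrt hc0]
    have hnself : ⟪n, n⟫ = ‖n‖ ^ 2 := real_inner_self_eq_norm_sq n
    rw [hnself]
    linear_combination hβn + hcdef
  have hqa : ⟪α • (a + b) + β • n, a⟫ = t := by
    simp only [inner_add_left, real_inner_smul_left, haa, hba, han]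
    linarith [hα]
  have hqb : ⟪α • (a + b) + β • n, b⟫ = t := by
    simp only [inner_add_left, real_inner_smul_left, hbb, hnb, hbn, ← hsdef]
    linarith [hα]
  have hq : ‖α • (a + b) + β • n‖ = r := by
    rw [← Real.sqrt_sq (norm_nonneg _), hq2, Real.sqrt_sq hr0.le]
  refine ⟨hq, ?_, ?_⟩
  · have : ‖α • (a + b) + β • n - a‖ ^ 2 = 4 * r ^ 2 - 1 := by
      rw [norm_sub_sq_real, hq2, hqa, ha, htdef]; ring
    rw [← Real.sqrt_sq (norm_nonneg _), this]
  · have : ‖α • (a + b) + β • n - b‖ ^ 2 = 4 * r ^ 2 - 1 := by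
      rw [norm_sub_sq_real, hq2, hqb, hb, htdef]; ring
    rw [← Real.sqrt_sq (norm_nonneg _), this]

theorem stmt_11 (r : ℝ) (hr : 1/2 < r) (hr' : r < Real.sqrt 3 / 3)
    (x : EuclideanSpace ℝ (Fin 3)) (hx : ‖x‖ = r) :
    let ρ := Real.sqrt (4 * r ^ 2 - 1)
    let V := {p : EuclideanSpace ℝ (Fin 3) //
      ‖p‖ = r ∧ (‖p - x‖ ≤ ρ ∨ ‖p - (-x)‖ ≤ ρ)}
    let G : SimpleGraph V := SimpleGraph.fromRel (fun u v => ‖(u : EuclideanSpace ℝ (Fin 3)) - v‖ = 1)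
    G.Connected ∧
    ∀ c₁ c₂ : V → Fin 2,
      (∀ u v, G.Adj u v → c₁ u ≠ c₁ v) →
      (∀ u v, G.Adj u v → c₂ u ≠ c₂ v) →
      c₁ = c₂ ∨ c₁ = (Equiv.swap (0 : Fin 2) 1) ∘ c₂ := by
  intro ρ V G
  have hr0 : (0:ℝ) < r := by linarith
  have hr2 : r ^ 2 < 1/3 := by
    have h1 : r ^ 2 < (Real.sqrt 3 / 3) ^ 2 := by
      apply pow_lt_pow_left₀ hr' hr0.le
      norm_num
    have h2 : (Real.sqrt 3 / 3) ^ 2 = 1/3 := by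
      rw [div_pow, Real.sq_sqrt (by norm_num : (0:ℝ) ≤ 3)]
      norm_num
    linarith
  have hρ0 : (0:ℝ) ≤ ρ := Real.sqrt_nonneg _
  have hρ2 : ρ ^ 2 = 4 * r ^ 2 - 1 := Real.sq_sqrt (by nlinarith)
  let x₀ : V := ⟨x, hx, Or.inl (by simpa using hρ0)⟩
  -- distance 1 from being at distance ρ from the antipode
  have hone : ∀ p q : EuclideanSpace ℝ (Fin 3), ‖p‖ = r → ‖q‖ = r →
      ‖q - (-p)‖ = ρ → ‖q - p‖ = 1 := by
    intro p q hp hq h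
    have h2 : ‖q + p‖ ^ 2 = 4 * r ^ 2 - 1 := by
      rw [← sub_neg_eq_add, h, hρ2]
    have h3 := norm_add_sq_real q p
    rw [hq, hp] at h3
    have h4 : ‖q - p‖ ^ 2 = 1 := by
      rw [norm_sub_sq_real, hq, hp]; nlinarith
    rw [← Real.sqrt_sq (norm_nonneg _), h4, Real.sqrt_one]
  -- adjacency from unit distance
  have hadj : ∀ u v : V, ‖(u : EuclideanSpace ℝ (Fin 3)) - v‖ = 1 → G.Adj u v := by
    intro u v h
    rw [SimpleGraph.fromRel_adj]
    refine ⟨?_, Or.inl h⟩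
    intro e
    rw [e] at h
    simp at h
  -- every vertex in the ball around x is reachable from x₀
  have reach1 : ∀ v : V, ‖(v : EuclideanSpace ℝ (Fin 3)) - x‖ ≤ ρ → G.Reachable x₀ v := by
    intro v hv
    obtain ⟨q, hq, hqp, hqx⟩ := stmt11_key r hr hr2 (-(v : EuclideanSpace ℝ (Fin 3))) (-x)
      (by rw [norm_neg]; exact v.2.1) (by rw [norm_neg]; exact hx)
      (by rw [neg_sub_neg, norm_sub_rev]; exact hv)
    let qv : V := ⟨q, hq, Or.inr (le_of_eq hqx)⟩
    have h1 : G.Adj x₀ qv := by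
      apply hadj
      rw [norm_sub_rev]
      exact hone x q hx hq hqx
    have h2 : G.Adj qv v := by
      apply hadj
      exact hone (v : EuclideanSpace ℝ (Fin 3)) q v.2.1 hq hqp
    exact h1.reachable.trans h2.reachable
  have reach : ∀ v : V, G.Reachable x₀ v := by
    intro v
    rcases v.2.2 with hv | hv
    · exact reach1 v hv
    · obtain ⟨q, hq, hqp, hqx⟩ := stmt11_key r hr hr2 (-(v : EuclideanSpace ℝ (Fin 3))) x
        (by rw [norm_neg]; exact v.2.1) hx
        (by rw [show -(v : EuclideanSpace ℝ (Fin 3)) - x = -((v : EuclideanSpace ℝ (Fin 3)) - -x) by abel, norm_neg]; exact hv)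
      let qv : V := ⟨q, hq, Or.inl (le_of_eq hqx)⟩
      have h1 : G.Reachable x₀ qv := reach1 qv (le_of_eq hqx)
      have h2 : G.Adj qv v := by
        apply hadj
        exact hone (v : EuclideanSpace ℝ (Fin 3)) q v.2.1 hq hqp
      exact h1.trans h2.reachable
  constructor
  · have : Nonempty V := ⟨x₀⟩
    exact ⟨fun u v => (reach u).symm.trans (reach v)⟩
  · intro c₁ c₂ h₁ h₂
    have step1 : ∀ a a' b b' : Fin 2, a ≠ a' → b ≠ b' → a = b → a' = b' := by decide
    have step2 : ∀ a a' b b' : Fin 2, a ≠ a' → b ≠ b' →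
        a = Equiv.swap (0 : Fin 2) 1 b → a' = Equiv.swap (0 : Fin 2) 1 b' := by decide
    have init : ∀ a b : Fin 2, a = b ∨ a = Equiv.swap (0 : Fin 2) 1 b := by decide
    have walk1 : ∀ (u v : V) (w : G.Walk u v), c₁ u = c₂ u → c₁ v = c₂ v := by
      intro u v w
      induction w with
      | nil => exact id
      | cons h p ih => exact fun hu => ih (step1 _ _ _ _ (h₁ _ _ h) (h₂ _ _ h) hu)
    have walk2 : ∀ (u v : V) (w : G.Walk u v), c₁ u = Equiv.swap (0 : Fin 2) 1 (c₂ u) →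
        c₁ v = Equiv.swap (0 : Fin 2) 1 (c₂ v) := by
      intro u v w
      induction w with
      | nil => exact id
      | cons h p ih => exact fun hu => ih (step2 _ _ _ _ (h₁ _ _ h) (h₂ _ _ h) hu)
    rcases init (c₁ x₀) (c₂ x₀) with h | h
    · left
      funext v
      obtain ⟨w⟩ := reach v
      exact walk1 _ _ w h
    · right
      funext v
      obtain ⟨w⟩ := reach v
      exact walk2 _ _ w h
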